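/- For every integer n ≥ 2, the points q_0, q_1, …, q_{n+3} are strictly increasing, and the collection {S_i}_{i=1}^{n+3} is a Markov partition for T̃_n: for all indices 1 ≤ i, j ≤ n+3, if the image T̃_n(S_j) intersects S_i, then S_i ⊆ T̃_n(S_j). -/

import Mathlib

set_option maxHeartbeats 1000000

open Matrix

/-- The paired tent map `T_κ : [-1,1] → [-1,1]`. -/
noncomputable def pairedTent (κ : ℝ) (x : ℝ) : ℝ :=
  if x ≤ -(1/2) then 2*(1+κ)*(x+1) - 1
  else if x < 0 then -(2*(1+κ))*x - 1
  else if x = 0 then 0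
  else if x ≤ 1/2 then -(2*(1+κ))*x + 1
  else 2*(1+κ)*(x-1) + 1

/-- The factor map `T̃_κ : [0,1] → [0,1]`, `T̃_κ(x) = |T_κ(x)|`. -/
noncomputable def factorTent (κ : ℝ) (x : ℝ) : ℝ := |pairedTent κ x|

/-- The partition points `q_0 < q_1 < ⋯ < q_{n+3}` of the Markov partition for `T̃_n`
(`n ≥ 2`): `q_0 = 0`, `q_1 = κ`, `q_2 = 1/2 - κ/(2(1+κ))`, `q_3 = 1/2`,
`q_{3+i} = 1 - (2+2κ)^{n-i} κ` for `1 ≤ i ≤ n-1`, and `q_{n+3} = 1`. -/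
noncomputable def factorPoint (n : ℕ) (κ : ℝ) (i : ℕ) : ℝ :=
  if i = 0 then 0
  else if i = 1 then κ
  else if i = 2 then 1/2 - κ/(2*(1+κ))
  else if i = 3 then 1/2
  else if i < n + 3 then 1 - (2 + 2*κ)^(n + 3 - i) * κ
  else 1

/-- The interval `S_i = (q_{i-1}, q_i)`, for `1 ≤ i ≤ n+3`. -/
noncomputable def factorInterval (n : ℕ) (κ : ℝ) (i : ℕ) : Set ℝ :=
  Set.Ioo (factorPoint n κ (i - 1)) (factorPoint n κ i)

/-- Image of an open interval under an increasing affine map. -/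
lemma img_inc (a b c d : ℝ) (ha : 0 < a) :
    (fun x => a*x - b) '' Set.Ioo c d = Set.Ioo (a*c - b) (a*d - b) := by
  ext y
  simp only [Set.mem_image, Set.mem_Ioo]
  constructor
  · rintro ⟨x, ⟨h1, h2⟩, rfl⟩
    constructor <;> nlinarith
  · rintro ⟨h1, h2⟩
    refine ⟨(y + b)/a, ⟨?_, ?_⟩, ?_⟩
    · rw [lt_div_iff₀ ha]; linarith
    · rw [div_lt_iff₀ ha]; linarith
    · field_simp
      ring

/-- Image of an open interval under a decreasing affine map. -/
lemma img_dec (a b c d : ℝ) (ha : 0 < a) :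
    (fun x => b - a*x) '' Set.Ioo c d = Set.Ioo (b - a*d) (b - a*c) := by
  ext y
  simp only [Set.mem_image, Set.mem_Ioo]
  constructor
  · rintro ⟨x, ⟨h1, h2⟩, rfl⟩
    constructor <;> nlinarith
  · rintro ⟨h1, h2⟩
    refine ⟨(b - y)/a, ⟨?_, ?_⟩, ?_⟩
    · rw [lt_div_iff₀ ha]; linarith
    · rw [div_lt_iff₀ ha]; linarith
    · field_simp
      ring

/-- For every `n ≥ 2` (with `κ_n` the unique `κ ∈ (0,1/2)` satisfying `(2+2κ)^n κ = 1`),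
the points `q_0, …, q_{n+3}` are strictly increasing, and `{S_i}_{i=1}^{n+3}` is a
Markov partition for `T̃_n`: if `T̃_n(S_j)` intersects `S_i`, then `S_i ⊆ T̃_n(S_j)`. -/

theorem factorTent_markov_partition (n : ℕ) (hn : 2 ≤ n) (κ : ℝ)
    (hκ : κ ∈ Set.Ioo (0 : ℝ) (1/2)) (heq : (2 + 2*κ)^n * κ = 1) :
    (∀ i j : ℕ, i < j → j ≤ n + 3 → factorPoint n κ i < factorPoint n κ j) ∧
    (∀ i j : ℕ, 1 ≤ i → i ≤ n + 3 → 1 ≤ j → j ≤ n + 3 →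
      ((factorTent κ '' factorInterval n κ j) ∩ factorInterval n κ i).Nonempty →
      factorInterval n κ i ⊆ factorTent κ '' factorInterval n κ j) := by
  obtain ⟨hκ0, hκh⟩ := hκ
  set L : ℝ := 2 + 2*κ with hLdef
  have hL : 2 < L := by rw [hLdef]; linarith
  have hL0 : 0 < L := by linarith
  have hL1 : 1 < L := by linarith
  have hLn : L^n * κ = 1 := heq
  have hL2n : L^2 ≤ L^n := pow_le_pow_right₀ (by linarith) hn
  have hL2κ : L^2 * κ ≤ 1 := by nlinarith
  have hLκ : L*κ < 1/2 := by nlinarith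
  have hκ4 : κ < 1/4 := by nlinarith
  have hpow1 : L^(n-1) * L = L^n := by
    rw [← pow_succ]; congr 1; omega
  have hn1 : L^(n-1) * κ * L = 1 := by
    rw [mul_right_comm, hpow1, hLn]
  have hpn1 : 0 < L^(n-1) * κ := mul_pos (pow_pos hL0 (n-1)) hκ0
  have hq4h : L^(n-1) * κ < 1/2 := by nlinarith
  -- values of the partition points
  have fp0 : factorPoint n κ 0 = 0 := by norm_num [factorPoint]
  have fp1 : factorPoint n κ 1 = κ := by norm_num [factorPoint]
  have fp2 : factorPoint n κ 2 = 1/L := by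
    have h2 : factorPoint n κ 2 = 1/2 - κ/(2*(1+κ)) := by norm_num [factorPoint]
    rw [h2, hLdef]
    have h1κ : (0:ℝ) < 1+κ := by linarith
    field_simp
    ring
  have fp3 : factorPoint n κ 3 = 1/2 := by norm_num [factorPoint]
  have fpm : ∀ i, 4 ≤ i → i < n+3 → factorPoint n κ i = 1 - L^(n+3-i)*κ := by
    intro i h4 hi
    have h : factorPoint n κ i = 1 - (2+2*κ)^(n+3-i)*κ := by
      unfold factorPoint
      rw [if_neg (by omega), if_neg (by omega), if_neg (by omega), if_neg (by omega),
        if_pos hi]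
    rw [h, ← hLdef]
  have fptop : factorPoint n κ (n+3) = 1 := by
    unfold factorPoint
    rw [if_neg (by omega), if_neg (by omega), if_neg (by omega), if_neg (by omega),
      if_neg (by omega)]
  have hinvL : 1/L < 1/2 := by
    rw [div_lt_div_iff₀ hL0 (by norm_num)]; linarith
  have hLinv : L * (1/L) = 1 := by field_simp
  -- adjacent monotonicity
  have adj : ∀ i, i < n+3 → factorPoint n κ i < factorPoint n κ (i+1) := by
    intro i hi
    match i with
    | 0 => rw [fp0, fp1]; exact hκ0
    | 1 =>
      rw [fp1, fp2, lt_div_iff₀ hL0]; nlinarith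
    | 2 =>
      rw [fp2, fp3]; exact hinvL
    | 3 =>
      rw [fp3, fpm 4 (by omega) (by omega)]
      have h : n+3-4 = n-1 := by omega
      rw [h]; linarith
    | (k+4) =>
      by_cases hlast : k+5 = n+3
      · rw [show k+4+1 = n+3 from hlast, fptop, fpm (k+4) (by omega) hi]
        have h : n+3-(k+4) = 1 := by omega
        rw [h, pow_one]; nlinarith
      · rw [fpm (k+4) (by omega) hi, fpm (k+5) (by omega) (by omega)]
        have hp : L^(n+3-(k+5)) < L^(n+3-(k+4)) :=
          pow_lt_pow_right₀ hL1 (by omega)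
        nlinarith
  have mono : ∀ j i : ℕ, i < j → j ≤ n + 3 → factorPoint n κ i < factorPoint n κ j := by
    intro j
    induction j with
    | zero => intro i h _; omega
    | succ k ih =>
      intro i hij hjk
      rcases Nat.lt_or_ge i k with h | h
      · exact (ih i h (by omega)).trans (adj k (by omega))
      · have hik : i = k := by omega
        subst hik; exact adj i (by omega)
  have wmono : ∀ i j : ℕ, i ≤ j → j ≤ n+3 → factorPoint n κ i ≤ factorPoint n κ j := by
    intro i j h1 h2
    rcases eq_or_lt_of_le h1 with rfl | h
    · exact le_rfl
    · exact (mono j i h h2).le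
  -- the key Markov lemma
  have key : ∀ a b i : ℕ, a ≤ n+3 → b ≤ n+3 → 1 ≤ i → i ≤ n+3 →
      (Set.Ioo (factorPoint n κ a) (factorPoint n κ b) ∩ factorInterval n κ i).Nonempty →
      factorInterval n κ i ⊆ Set.Ioo (factorPoint n κ a) (factorPoint n κ b) := by
    intro a b i ha hb hi1 hi hne
    obtain ⟨x, hx1, hx2⟩ := hne
    simp only [factorInterval, Set.mem_Ioo] at hx1 hx2
    have hai : a ≤ i - 1 := by
      by_contra hc
      have h1 : i ≤ a := by omega
      have := wmono i a h1 ha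
      linarith [hx1.1, hx2.2]
    have hbi : i ≤ b := by
      by_contra hc
      have h1 : b ≤ i - 1 := by omega
      have := wmono b (i-1) h1 (by omega)
      linarith [hx1.2, hx2.1]
    simp only [factorInterval]
    exact Set.Ioo_subset_Ioo (wmono a (i-1) hai (by omega)) (wmono i b hbi hb)
  -- pointwise formulas
  have ftA : ∀ x : ℝ, 0 < x → x ≤ 1/2 → factorTent κ x = |1 - L*x| := by
    intro x h0 h2
    unfold factorTent pairedTent
    rw [if_neg (by linarith), if_neg (by linarith), if_neg h0.ne', if_pos h2, hLdef]
    congr 1; ring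
  have ftB : ∀ x : ℝ, 1/2 < x → factorTent κ x = |L*x - (L-1)| := by
    intro x h2
    have h0 : (0:ℝ) < x := by linarith
    unfold factorTent pairedTent
    rw [if_neg (by linarith), if_neg (by linarith), if_neg h0.ne', if_neg (by linarith),
      hLdef]
    congr 1; ring
  -- sign helper on the right half
  have hq4x : ∀ x : ℝ, 1 - L^(n-1)*κ < x → 1/2 < x ∧ 0 < L*x - (L-1) := by
    intro x hx
    constructor
    · linarith
    · have h := mul_lt_mul_of_pos_left hx hL0
      nlinarith
  constructor
  · intro i j hij hj
    exact mono j i hij hj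
  · intro i j hi1 hi hj1 hj hne
    by_cases hJtop : j = n+3
    · -- j = n+3
      subst hJtop
      obtain ⟨a, ha3, hfa⟩ : ∃ a, a ≤ n+3 ∧ factorPoint n κ a = 1 - L^2*κ := by
        by_cases hn2 : n = 2
        · refine ⟨0, by omega, ?_⟩
          rw [fp0]
          have : L^2 * κ = 1 := by rw [← hn2]; exact hLn
          linarith
        · refine ⟨n+1, by omega, ?_⟩
          rw [fpm (n+1) (by omega) (by omega)]
          have h : n+3-(n+1) = 2 := by omega
          rw [h]
      have e : factorInterval n κ (n+3) = Set.Ioo (1 - L*κ) 1 := by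
        simp only [factorInterval]
        have h1 : n+3-1 = n+2 := by omega
        rw [h1, fpm (n+2) (by omega) (by omega), fptop]
        have h2 : n+3-(n+2) = 1 := by omega
        rw [h2, pow_one]
      have hpt : ∀ x ∈ Set.Ioo (1 - L*κ) 1, factorTent κ x = (fun x => L*x - (L-1)) x := by
        intro x hx
        have hle : L ≤ L^(n-1) := by
          calc L = L^1 := (pow_one L).symm
          _ ≤ L^(n-1) := pow_le_pow_right₀ (by linarith) (by omega)
        have h1 : 1 - L^(n-1)*κ < x := by nlinarith [hx.1]
        obtain ⟨hhalf, hsign⟩ := hq4x x h1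
        rw [ftB x hhalf, abs_of_pos hsign]
      have himg : factorTent κ '' factorInterval n κ (n+3)
          = Set.Ioo (factorPoint n κ a) (factorPoint n κ (n+3)) := by
        rw [e, Set.image_congr hpt, img_inc L (L-1) _ _ hL0, fptop, hfa]
        rw [show L*(1 - L*κ) - (L-1) = 1 - L^2*κ by ring, show L*1 - (L-1) = 1 by ring]
      rw [himg] at hne ⊢
      exact key a (n+3) i ha3 le_rfl hi1 hi hne
    · have hj2 : j ≤ n+2 := by omega
      match j, hj1 with
      | 1, _ =>
        have e : factorInterval n κ 1 = Set.Ioo 0 κ := by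
          simp only [factorInterval]
          norm_num [fp0, fp1]
        have hpt : ∀ x ∈ Set.Ioo (0:ℝ) κ, factorTent κ x = (fun x => 1 - L*x) x := by
          intro x hx
          rw [ftA x hx.1 (by linarith [hx.2]), abs_of_pos (by nlinarith [hx.2])]
        have himg : factorTent κ '' factorInterval n κ 1
            = Set.Ioo (factorPoint n κ (n+2)) (factorPoint n κ (n+3)) := by
          rw [e, Set.image_congr hpt, img_dec L 1 _ _ hL0, fptop,
            fpm (n+2) (by omega) (by omega)]
          have h2 : n+3-(n+2) = 1 := by omega
          rw [h2, pow_one]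
          norm_num
        rw [himg] at hne ⊢
        exact key (n+2) (n+3) i (by omega) le_rfl hi1 hi hne
      | 2, _ =>
        have e : factorInterval n κ 2 = Set.Ioo κ (1/L) := by
          simp only [factorInterval]
          norm_num [fp1, fp2]
        have hpt : ∀ x ∈ Set.Ioo κ (1/L), factorTent κ x = (fun x => 1 - L*x) x := by
          intro x hx
          have hx1 : L*x < 1 := by
            have := mul_lt_mul_of_pos_left hx.2 hL0
            rw [hLinv] at this; exact this
          rw [ftA x (by linarith [hx.1]) (by linarith [hx.2]), abs_of_pos (by linarith)]
        have himg : factorTent κ '' factorInterval n κ 2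
            = Set.Ioo (factorPoint n κ 0) (factorPoint n κ (n+2)) := by
          rw [e, Set.image_congr hpt, img_dec L 1 _ _ hL0, fp0,
            fpm (n+2) (by omega) (by omega)]
          have h2 : n+3-(n+2) = 1 := by omega
          rw [h2, pow_one, hLinv]
          norm_num
        rw [himg] at hne ⊢
        exact key 0 (n+2) i (by omega) (by omega) hi1 hi hne
      | 3, _ =>
        have e : factorInterval n κ 3 = Set.Ioo (1/L) (1/2) := by
          simp only [factorInterval]
          norm_num [fp2, fp3]
        have hpt : ∀ x ∈ Set.Ioo (1/L) (1/2), factorTent κ x = (fun x => L*x - 1) x := by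
          intro x hx
          have hx1 : 1 < L*x := by
            have := mul_lt_mul_of_pos_left hx.1 hL0
            rw [hLinv] at this; exact this
          have h0 : (0:ℝ) < x := lt_trans (by positivity) hx.1
          rw [ftA x h0 (by linarith [hx.2]), abs_of_neg (by linarith)]
          ring
        have himg : factorTent κ '' factorInterval n κ 3
            = Set.Ioo (factorPoint n κ 0) (factorPoint n κ 1) := by
          rw [e, Set.image_congr hpt, img_inc L 1 _ _ hL0, fp0, fp1, hLinv]
          rw [show L*(1/2) - 1 = κ by rw [hLdef]; ring]
          norm_num
        rw [himg] at hne ⊢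
        exact key 0 1 i (by omega) (by omega) hi1 hi hne
      | 4, _ =>
        have e : factorInterval n κ 4 = Set.Ioo (1/2) (1 - L^(n-1)*κ) := by
          simp only [factorInterval]
          norm_num [fp3]
          rw [fpm 4 (by omega) (by omega)]
          have h : n+3-4 = n-1 := by omega
          rw [h]
        have hpt : ∀ x ∈ Set.Ioo (1/2) (1 - L^(n-1)*κ),
            factorTent κ x = (fun x => (L-1) - L*x) x := by
          intro x hx
          have hsign : L*x - (L-1) < 0 := by
            have := mul_lt_mul_of_pos_left hx.2 hL0
            nlinarith
          rw [ftB x hx.1, abs_of_neg hsign]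
          ring
        have himg : factorTent κ '' factorInterval n κ 4
            = Set.Ioo (factorPoint n κ 0) (factorPoint n κ 1) := by
          rw [e, Set.image_congr hpt, img_dec L (L-1) _ _ hL0, fp0, fp1]
          rw [show (L-1) - L*(1 - L^(n-1)*κ) = 0 by linear_combination hn1,
            show (L-1) - L*(1/2) = κ by rw [hLdef]; ring]
        rw [himg] at hne ⊢
        exact key 0 1 i (by omega) (by omega) hi1 hi hne
      | (j'+5), _ =>
        -- 5 ≤ j ≤ n+2
        have hj5 : j'+5 ≤ n+2 := hj2
        obtain ⟨a, ha3, hfa⟩ : ∃ a, a ≤ n+3 ∧ factorPoint n κ a = 1 - L^(n-j')*κ := by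
          rcases Nat.eq_zero_or_pos j' with h0 | h1
          · subst h0
            refine ⟨0, by omega, ?_⟩
            rw [fp0]
            simp only [Nat.sub_zero]
            linarith
          · refine ⟨j'+3, by omega, ?_⟩
            rw [fpm (j'+3) (by omega) (by omega)]
            have h : n+3-(j'+3) = n-j' := by omega
            rw [h]
        have e : factorInterval n κ (j'+5)
            = Set.Ioo (1 - L^(n-1-j')*κ) (1 - L^(n-2-j')*κ) := by
          simp only [factorInterval]
          have h1 : j'+5-1 = j'+4 := by omega
          rw [h1, fpm (j'+4) (by omega) (by omega), fpm (j'+5) (by omega) (by omega)]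
          have h2 : n+3-(j'+4) = n-1-j' := by omega
          have h3 : n+3-(j'+5) = n-2-j' := by omega
          rw [h2, h3]
        have hpt : ∀ x ∈ Set.Ioo (1 - L^(n-1-j')*κ) (1 - L^(n-2-j')*κ),
            factorTent κ x = (fun x => L*x - (L-1)) x := by
          intro x hx
          have hle : L^(n-1-j') ≤ L^(n-1) := pow_le_pow_right₀ (by linarith) (by omega)
          have h1 : 1 - L^(n-1)*κ < x := by nlinarith [hx.1]
          obtain ⟨hhalf, hsign⟩ := hq4x x h1
          rw [ftB x hhalf, abs_of_pos hsign]
        have hstep : ∀ m : ℕ, L*(1 - L^m*κ) - (L-1) = 1 - L^(m+1)*κ := by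
          intro m; rw [pow_succ]; ring
        have himg : factorTent κ '' factorInterval n κ (j'+5)
            = Set.Ioo (factorPoint n κ a) (factorPoint n κ (j'+4)) := by
          rw [e, Set.image_congr hpt, img_inc L (L-1) _ _ hL0, hstep, hstep, hfa,
            fpm (j'+4) (by omega) (by omega)]
          have h2 : n-1-j'+1 = n-j' := by omega
          have h3 : n-2-j'+1 = n-1-j' := by omega
          have h4 : n+3-(j'+4) = n-1-j' := by omega
          rw [h2, h3, h4]
        rw [himg] at hne ⊢
        exact key a (j'+4) i ha3 (by omega) hi1 hi hne
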